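/- arXiv:1501.06222 — 4 statements merged into one kernel-verified Lean document; each statement's English description precedes it below -/
import Mathlib

section
/- For any orthonormal basis {|π⟩, |π⊥⟩} of a 2-dimensional subspace H of C² ⊗ H_B (H_B finite dimensional), there exists an orthonormal basis {|0⟩_A, |1⟩_A} of C² and vectors η_0, η_1, ν_0, ν_1 ∈ H_B such that |π⟩ = |0⟩_A|η_0⟩ + |1⟩_A|η_1⟩, |π⊥⟩ = |0⟩_A|ν_0⟩ + |1⟩_A|ν_1⟩, and ⟨η_k|ν_k⟩ = 0 for each k ∈ {0,1}. -/
noncomputable section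
open scoped InnerProductSpace ComplexConjugate ComplexOrder

variable {E F : Type*} [NormedAddCommGroup E] [InnerProductSpace ℂ E]
  [NormedAddCommGroup F] [InnerProductSpace ℂ F]

/-- rank-one operator |x⟩⟨y| : E → F -/
def rankOne (x : F) (y : E) : E →ₗ[ℂ] F where
  toFun z := ⟪y, z⟫_ℂ • x
  map_add' a b := by simp [inner_add_right, add_smul]
  map_smul' c a := by simp [inner_smul_right, smul_smul]

/-- positive semidefinite operator (using the complex partial order) -/
def IsPSD {E : Type*} [NormedAddCommGroup E] [InnerProductSpace ℂ E]
    (T : E →ₗ[ℂ] E) : Prop := ∀ x : E, 0 ≤ ⟪x, T x⟫_ℂ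

/-- simple tensor v ⊗ b in ℂⁿ ⊗ H_B, modeled as `PiLp 2` -/
def tp {n : ℕ} {HB : Type*} [NormedAddCommGroup HB] [InnerProductSpace ℂ HB]
    (v : EuclideanSpace ℂ (Fin n)) (b : HB) : PiLp 2 (fun _ : Fin n => HB) :=
  (WithLp.equiv 2 _).symm fun i => v i • b

/-- operator tensor M ⊗ X on ℂⁿ ⊗ H_B, where M is a matrix on ℂⁿ -/
def opT {n : ℕ} {HB : Type*} [NormedAddCommGroup HB] [InnerProductSpace ℂ HB]
    (M : Matrix (Fin n) (Fin n) ℂ) (X : HB →ₗ[ℂ] HB) :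
    PiLp 2 (fun _ : Fin n => HB) →ₗ[ℂ] PiLp 2 (fun _ : Fin n => HB) where
  toFun f := (WithLp.equiv 2 _).symm fun i => ∑ j, M i j • X (f j)
  map_add' f g := by
    ext i
    simp only [WithLp.equiv_symm_apply, PiLp.toLp_apply, PiLp.add_apply, map_add, smul_add]
    exact Finset.sum_add_distrib
  map_smul' c f := by
    ext i
    simp only [WithLp.equiv_symm_apply, PiLp.toLp_apply, PiLp.smul_apply, map_smul, RingHom.id_apply,
      Finset.smul_sum]
    exact Finset.sum_congr rfl fun j _ => (smul_comm _ _ _)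

/-- outer product matrix |v⟩⟨v| -/
def outerM {n : ℕ} (v : EuclideanSpace ℂ (Fin n)) : Matrix (Fin n) (Fin n) ℂ :=
  fun i j => v i * conj (v j)

/-- orthogonal projection onto a subspace, as an operator -/
def projOp {E : Type*} [NormedAddCommGroup E] [InnerProductSpace ℂ E]
    [FiniteDimensional ℂ E] (K : Submodule ℂ E) : E →ₗ[ℂ] E :=
  (K.subtypeL.comp (K.orthogonalProjectionOnto)).toLinearMap

private lemma exists_unit_z (d : ℂ) : ∃ z : ℂ, conj z * z = 1 ∧ (d * z).im = 0 := by
  rcases eq_or_ne d 0 with hd | hd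
  · exact ⟨1, by simp, by simp [hd]⟩
  · have habs : ((‖d‖ : ℝ) : ℂ) ≠ 0 := by
      simpa using (norm_ne_zero_iff.mpr hd)
    refine ⟨conj d / ((‖d‖ : ℝ) : ℂ), ?_, ?_⟩
    · rw [map_div₀, Complex.conj_conj, Complex.conj_ofReal, div_mul_div_comm,
        Complex.mul_conj, ← Complex.ofReal_mul, ← sq, Complex.sq_norm, div_self]
      exact_mod_cast fun hh => hd (Complex.normSq_eq_zero.mp (by exact_mod_cast hh))
    · rw [mul_div_assoc', Complex.mul_conj, ← Complex.ofReal_div, Complex.ofReal_im]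

private lemma key_lemma (a b c : ℂ) :
    ∃ x y : ℂ, conj x * x + conj y * y = 1 ∧
      a * (conj x * x - conj y * y) + b * (conj x * y) + c * (conj y * x) = 0 := by
  rcases eq_or_ne a 0 with ha | ha
  · exact ⟨1, 0, by simp, by simp [ha]⟩
  obtain ⟨z, hz, hdz⟩ := exists_unit_z (b * conj a - conj c * a)
  have him : ((b * z + c * conj z) * conj a).im = 0 := by
    have hsplit : (b * z + c * conj z) * conj a = (b * conj a - conj c * a) * z
        + (c * conj a * conj z + conj (c * conj a * conj z)) := by
      simp only [map_mul, Complex.conj_conj]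
      ring
    rw [hsplit]
    simp only [Complex.add_im, hdz, Complex.conj_im]
    ring
  have hnsq : (Complex.normSq a : ℝ) ≠ 0 := fun hh => ha (Complex.normSq_eq_zero.mp hh)
  obtain ⟨ρ, hB2⟩ : ∃ ρ : ℝ, b * z + c * conj z = (ρ : ℂ) * a := by
    refine ⟨((b * z + c * conj z) * conj a).re / Complex.normSq a, ?_⟩
    have h1 : (b * z + c * conj z) * conj a = (((b * z + c * conj z) * conj a).re : ℂ) := by
      conv_lhs => rw [← Complex.re_add_im ((b * z + c * conj z) * conj a)]
      rw [him]
      simp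
    have h3 : (b * z + c * conj z) * (Complex.normSq a : ℂ)
        = (((b * z + c * conj z) * conj a).re : ℂ) * a := by
      have hca : (conj a) * a = (Complex.normSq a : ℂ) := by
        rw [mul_comm, Complex.mul_conj]
      calc (b * z + c * conj z) * (Complex.normSq a : ℂ)
          = ((b * z + c * conj z) * conj a) * a := by rw [← hca]; ring
        _ = (((b * z + c * conj z) * conj a).re : ℂ) * a := by
            rw [h1, Complex.ofReal_re]
    push_cast
    rw [div_mul_eq_mul_div, eq_div_iff (by exact_mod_cast hnsq)]
    linear_combination h3
  obtain ⟨t, _, ht⟩ : ∃ t ∈ Set.Icc (0:ℝ) (Real.pi/2),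
      Real.cos (2*t) + ρ * (Real.sin t * Real.cos t) = 0 := by
    have hcont : ContinuousOn (fun t : ℝ => Real.cos (2*t) + ρ * (Real.sin t * Real.cos t))
        (Set.Icc 0 (Real.pi/2)) := by fun_prop
    have hle : (0:ℝ) ≤ Real.pi/2 := by positivity
    have hmem : (0:ℝ) ∈ Set.Icc
        (Real.cos (2*(Real.pi/2)) + ρ * (Real.sin (Real.pi/2) * Real.cos (Real.pi/2)))
        (Real.cos (2*0) + ρ * (Real.sin 0 * Real.cos 0)) := by
      rw [show 2*(Real.pi/2) = Real.pi by ring]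
      simp [Real.cos_pi, Real.cos_pi_div_two]
    obtain ⟨t, ht1, ht2⟩ := intermediate_value_Icc' hle hcont hmem
    exact ⟨t, ht1, ht2⟩
  have hS2C2 : ((Real.sin t : ℂ))^2 + ((Real.cos t : ℂ))^2 = 1 := by
    rw [← Complex.ofReal_pow, ← Complex.ofReal_pow, ← Complex.ofReal_add,
      Real.sin_sq_add_cos_sq, Complex.ofReal_one]
  have htC : ((Real.cos (2*t) : ℂ)) + (ρ:ℂ) * ((Real.sin t : ℂ) * (Real.cos t : ℂ)) = 0 := by
    have h0 := congrArg (Complex.ofReal) ht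
    simpa only [Complex.ofReal_add, Complex.ofReal_mul, Complex.ofReal_zero] using h0
  have hD2C : ((Real.cos (2*t) : ℂ)) = 2 * ((Real.cos t : ℂ))^2 - 1 := by
    have h0 := congrArg (Complex.ofReal) (Real.cos_two_mul t)
    simpa only [Complex.ofReal_sub, Complex.ofReal_mul, Complex.ofReal_pow,
      Complex.ofReal_ofNat, Complex.ofReal_one] using h0
  refine ⟨(Real.cos t : ℂ), z * (Real.sin t : ℂ), ?_, ?_⟩
  · simp only [map_mul, Complex.conj_ofReal]
    linear_combination ((Real.sin t : ℂ))^2 * hz + hS2C2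
  · simp only [map_mul, Complex.conj_ofReal]
    linear_combination ((Real.sin t : ℂ) * (Real.cos t : ℂ)) * hB2 + a * htC - a * hD2C
      - a * ((Real.sin t : ℂ))^2 * hz - a * hS2C2

/-- any orthonormal basis {π, π⊥} of a 2D subspace of ℂ² ⊗ H_B can be
written with a suitable orthonormal basis of ℂ² and Bob vectors η_k ⊥ ν_k. -/
theorem walgate_form_exists
    {HB : Type*} [NormedAddCommGroup HB] [InnerProductSpace ℂ HB] [FiniteDimensional ℂ HB]
    (pi pip : PiLp 2 (fun _ : Fin 2 => HB)) (h : Orthonormal ℂ ![pi, pip]) :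
    ∃ (e : Fin 2 → EuclideanSpace ℂ (Fin 2)) (η ν : Fin 2 → HB),
      Orthonormal ℂ e ∧
      pi = tp (e 0) (η 0) + tp (e 1) (η 1) ∧
      pip = tp (e 0) (ν 0) + tp (e 1) (ν 1) ∧
      ∀ k : Fin 2, ⟪η k, ν k⟫_ℂ = 0 := by
  have hinner : ⟪pi, pip⟫_ℂ = 0 := by
    have := h.2 (show (0:Fin 2) ≠ 1 by decide)
    simpa using this
  have htr : ⟪pi 1, pip 1⟫_ℂ = -⟪pi 0, pip 0⟫_ℂ := by
    have h2 : ⟪pi 0, pip 0⟫_ℂ + ⟪pi 1, pip 1⟫_ℂ = 0 := by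
      have := hinner
      rw [PiLp.inner_apply, Fin.sum_univ_two] at this
      exact this
    linear_combination h2
  obtain ⟨x, y, hxy, hkey⟩ := key_lemma ⟪pi 0, pip 0⟫_ℂ ⟪pi 0, pip 1⟫_ℂ ⟪pi 1, pip 0⟫_ℂ
  refine ⟨![(WithLp.equiv 2 _).symm ![conj x, conj y], (WithLp.equiv 2 _).symm ![-y, x]],
    ![x • pi 0 + y • pi 1, (-conj y) • pi 0 + conj x • pi 1],
    ![x • pip 0 + y • pip 1, (-conj y) • pip 0 + conj x • pip 1], ?_, ?_, ?_, ?_⟩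
  · rw [orthonormal_iff_ite]
    intro i j
    have hsimp : ∀ u v : EuclideanSpace ℂ (Fin 2), ⟪u, v⟫_ℂ = conj (u 0) * v 0 + conj (u 1) * v 1 := by
      intro u v
      rw [PiLp.inner_apply, Fin.sum_univ_two]
      exact congrArg₂ (· + ·) (RCLike.inner_apply' _ _) (RCLike.inner_apply' _ _)
    fin_cases i <;> fin_cases j <;>
      simp only [Fin.zero_eta, Fin.mk_one, Fin.isValue, Matrix.cons_val_zero,
        Matrix.cons_val_one, Matrix.head_cons, hsimp, WithLp.equiv_symm_apply, PiLp.toLp_apply,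
        Complex.conj_conj, map_neg] <;>
      first
        | (rw [if_pos trivial]; linear_combination hxy)
        | (rw [if_neg (by decide)]; ring)
  · ext j
    fin_cases j <;>
    · simp only [PiLp.add_apply, tp, WithLp.equiv_symm_apply, PiLp.toLp_apply,
        Matrix.cons_val_zero, Matrix.cons_val_one, Matrix.head_cons, Fin.isValue,
        Fin.zero_eta, Fin.mk_one]
      match_scalars <;> first | linear_combination hxy | linear_combination -hxy | ring
  · ext j
    fin_cases j <;>
    · simp only [PiLp.add_apply, tp, WithLp.equiv_symm_apply, PiLp.toLp_apply,
        Matrix.cons_val_zero, Matrix.cons_val_one, Matrix.head_cons, Fin.isValue,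
        Fin.zero_eta, Fin.mk_one]
      match_scalars <;> first | linear_combination hxy | linear_combination -hxy | ring
  · intro k
    fin_cases k
    · simp only [Fin.zero_eta, Fin.isValue, Matrix.cons_val_zero, inner_add_left, inner_add_right,
        inner_smul_left, inner_smul_right, map_neg, Complex.conj_conj]
      linear_combination hkey + (conj y * y) * htr
    · simp only [Fin.mk_one, Fin.isValue, Matrix.cons_val_one, Matrix.head_cons, Matrix.cons_val_zero, inner_add_left, inner_add_right,
        inner_smul_left, inner_smul_right, map_neg, Complex.conj_conj]
      linear_combination (x * conj x) * htr - hkey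
end
end

section
/- Let U_SA be a unitary on C² ⊗ C² with U_SA|s_0⟩|0⟩_A = (sin θ|s_0⟩ + cos θ|s_1⟩)|0⟩_A and U_SA|s_0⟩|1⟩_A = |s_1⟩|1⟩_A, let U = U_SA ⊗ I_B, P the orthogonal projection onto H ⊆ C²_A ⊗ H_B, P̃ = U(|s_0⟩⟨s_0| ⊗ P)U†, Z̃_0 = P̃(|s_0⟩⟨s_0| ⊗ I_{AB})P̃, and Z_0 = P(|0⟩⟨0|_A ⊗ I_B)P. Then U† Z̃_0 U = sin²θ · |s_0⟩⟨s_0| ⊗ Z_0. -/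
noncomputable section
open scoped InnerProductSpace ComplexConjugate ComplexOrder

variable {E F : Type*} [NormedAddCommGroup E] [InnerProductSpace ℂ E]
  [NormedAddCommGroup F] [InnerProductSpace ℂ F]

/-- operator U_SA ⊗ I_B on ℂⁿ ⊗ (ℂᵐ ⊗ H_B), where U_SA is given by its matrix on
ℂⁿ ⊗ ℂᵐ. -/
def opU {n m : ℕ} {HB : Type*} [NormedAddCommGroup HB] [InnerProductSpace ℂ HB]
    (U : Matrix (Fin n × Fin m) (Fin n × Fin m) ℂ) :
    PiLp 2 (fun _ : Fin n => PiLp 2 (fun _ : Fin m => HB)) →ₗ[ℂ]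
      PiLp 2 (fun _ : Fin n => PiLp 2 (fun _ : Fin m => HB)) where
  toFun f := (WithLp.equiv 2 _).symm fun i =>
    (WithLp.equiv 2 _).symm fun j => ∑ p : Fin n × Fin m, U (i, j) p • f p.1 p.2
  map_add' f g := by
    ext i j
    simp only [WithLp.equiv_symm_apply, PiLp.toLp_apply, PiLp.add_apply, smul_add]
    exact Finset.sum_add_distrib
  map_smul' c f := by
    ext i j
    simp only [WithLp.equiv_symm_apply, PiLp.toLp_apply, PiLp.smul_apply, RingHom.id_apply, Finset.smul_sum]
    exact Finset.sum_congr rfl fun p _ => (smul_comm _ _ _)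

section Aux

variable {HB : Type*} [NormedAddCommGroup HB] [InnerProductSpace ℂ HB]

/-- extraction of the v-component: (⟨v| ⊗ I) f -/
def comp0 {n : ℕ} (v : EuclideanSpace ℂ (Fin n)) (f : PiLp 2 (fun _ : Fin n => HB)) : HB :=
  ∑ j, (starRingEnd ℂ) (v j) • f j

lemma tp_apply {n : ℕ} (v : EuclideanSpace ℂ (Fin n)) (b : HB) (i : Fin n) :
    tp v b i = v i • b := rfl

lemma opT_apply {n : ℕ} (M : Matrix (Fin n) (Fin n) ℂ) (X : HB →ₗ[ℂ] HB)
    (f : PiLp 2 (fun _ : Fin n => HB)) (i : Fin n) :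
    opT M X f i = ∑ j, M i j • X (f j) := rfl

lemma opT_outer {n : ℕ} (v : EuclideanSpace ℂ (Fin n)) (X : HB →ₗ[ℂ] HB)
    (f : PiLp 2 (fun _ : Fin n => HB)) :
    opT (outerM v) X f = tp v (X (comp0 v f)) := by
  ext i
  rw [opT_apply, tp_apply, comp0, map_sum]
  rw [Finset.smul_sum]
  refine Finset.sum_congr rfl fun j _ => ?_
  rw [map_smul, outerM, smul_smul]

lemma tp_add_right {n : ℕ} (v : EuclideanSpace ℂ (Fin n)) (b b' : HB) :
    tp v (b + b') = tp v b + tp v b' := by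
  ext i; show v i • (b + b') = v i • b + v i • b'; rw [smul_add]

lemma tp_smul_right {n : ℕ} (v : EuclideanSpace ℂ (Fin n)) (c : ℂ) (b : HB) :
    tp v (c • b) = c • tp v b := by
  ext i; show v i • (c • b) = c • (v i • b); rw [smul_comm]

lemma comp0_add {n : ℕ} (v : EuclideanSpace ℂ (Fin n)) (f g : PiLp 2 (fun _ : Fin n => HB)) :
    comp0 v (f + g) = comp0 v f + comp0 v g := by
  simp [comp0, smul_add, Finset.sum_add_distrib]

lemma comp0_smul {n : ℕ} (v : EuclideanSpace ℂ (Fin n)) (c : ℂ) (f : PiLp 2 (fun _ : Fin n => HB)) :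
    comp0 v (c • f) = c • comp0 v f := by
  simp [comp0, Finset.smul_sum, smul_smul, mul_comm]

lemma comp0_tp {n : ℕ} (v w : EuclideanSpace ℂ (Fin n)) (b : HB) :
    comp0 v (tp w b) = ⟪v, w⟫_ℂ • b := by
  simp only [comp0, tp_apply, smul_smul, PiLp.inner_apply, RCLike.inner_apply]
  rw [Finset.sum_smul]
  exact Finset.sum_congr rfl fun j _ => by rw [mul_comm]

lemma inner_tp_right {n : ℕ} (v : EuclideanSpace ℂ (Fin n)) (b : HB)
    (w : PiLp 2 (fun _ : Fin n => HB)) :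
    ⟪w, tp v b⟫_ℂ = ⟪comp0 v w, b⟫_ℂ := by
  simp only [PiLp.inner_apply, tp_apply, comp0, inner_smul_right, sum_inner, inner_smul_left]
  simp

lemma inner_tp_left {n : ℕ} (v : EuclideanSpace ℂ (Fin n)) (b : HB)
    (w : PiLp 2 (fun _ : Fin n => HB)) :
    ⟪tp v b, w⟫_ℂ = ⟪b, comp0 v w⟫_ℂ := by
  simp only [PiLp.inner_apply, tp_apply, comp0, inner_smul_left, inner_sum, inner_smul_right]

lemma projOp_inner {E : Type*} [NormedAddCommGroup E] [InnerProductSpace ℂ E]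
    [FiniteDimensional ℂ E] (K : Submodule ℂ E) (x y : E) :
    ⟪projOp K x, y⟫_ℂ = ⟪x, projOp K y⟫_ℂ := by
  exact Submodule.inner_starProjection_left_eq_right K x y

end Aux
section Aux2

variable {HB : Type*} [NormedAddCommGroup HB] [InnerProductSpace ℂ HB]

lemma opU_apply {n m : ℕ} (M : Matrix (Fin n × Fin m) (Fin n × Fin m) ℂ)
    (f : PiLp 2 (fun _ : Fin n => PiLp 2 (fun _ : Fin m => HB))) (i : Fin n) (j : Fin m) :
    opU M f i j = ∑ p : Fin n × Fin m, M (i, j) p • f p.1 p.2 := rfl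

lemma opU_comp {n m : ℕ} (M N : Matrix (Fin n × Fin m) (Fin n × Fin m) ℂ) :
    opU (HB := HB) M ∘ₗ opU N = opU (M * N) := by
  apply LinearMap.ext; intro f
  ext i j
  rw [LinearMap.comp_apply, opU_apply, opU_apply]
  simp only [opU_apply, Matrix.mul_apply, Finset.smul_sum, Finset.sum_smul, smul_smul]
  rw [Finset.sum_comm]

lemma opU_one {n m : ℕ} :
    opU (HB := HB) (1 : Matrix (Fin n × Fin m) (Fin n × Fin m) ℂ) = LinearMap.id := by
  apply LinearMap.ext; intro f
  ext i j
  rw [opU_apply, Fintype.sum_prod_type]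
  simp [Matrix.one_apply, Prod.ext_iff, ite_and, ite_smul]

lemma opU_adjoint [FiniteDimensional ℂ HB] {n m : ℕ}
    (M : Matrix (Fin n × Fin m) (Fin n × Fin m) ℂ) :
    LinearMap.adjoint (opU (HB := HB) M) = opU M.conjTranspose := by
  symm
  rw [LinearMap.eq_adjoint_iff]
  intro x y
  simp only [PiLp.inner_apply, opU_apply, sum_inner, inner_sum, inner_smul_left,
    inner_smul_right, Matrix.conjTranspose_apply, RingHom.id_apply, starRingEnd_self_apply]
  rw [← Fintype.sum_prod_type']
  conv_rhs => rw [← Fintype.sum_prod_type']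
  rw [Finset.sum_comm]
  refine Finset.sum_congr rfl fun q _ => Finset.sum_congr rfl fun p _ => ?_
  simp

end Aux2
section Aux3

variable {HB : Type*} [NormedAddCommGroup HB] [InnerProductSpace ℂ HB]

lemma complete_two (a : Fin 2 → EuclideanSpace ℂ (Fin 2)) (ha : Orthonormal ℂ a)
    (j j' : Fin 2) :
    ∑ k : Fin 2, a k j * (starRingEnd ℂ) (a k j') = if j = j' then 1 else 0 := by
  classical
  set M : Matrix (Fin 2) (Fin 2) ℂ := Matrix.of fun k j => (starRingEnd ℂ) (a k j) with hM
  have h1 : M * M.conjTranspose = 1 := by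
    ext k l
    have horth := orthonormal_iff_ite.mp ha k l
    simp only [PiLp.inner_apply, RCLike.inner_apply] at horth
    simp only [Matrix.mul_apply, Matrix.conjTranspose_apply, hM, Matrix.of_apply,
      Matrix.one_apply, star, starRingEnd_self_apply]
    simpa [mul_comm] using horth
  have h2 : M.conjTranspose * M = 1 := mul_eq_one_comm.mp h1
  have h3 := congrFun (congrFun h2 j) j'
  simp only [Matrix.mul_apply, Matrix.conjTranspose_apply, hM, Matrix.of_apply,
    Matrix.one_apply, star, starRingEnd_self_apply] at h3
  simpa using h3

lemma tp_decomp (a : Fin 2 → EuclideanSpace ℂ (Fin 2)) (ha : Orthonormal ℂ a)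
    (η : PiLp 2 (fun _ : Fin 2 => HB)) :
    tp (a 0) (comp0 (a 0) η) + tp (a 1) (comp0 (a 1) η) = η := by
  classical
  ext j
  show (a 0) j • comp0 (a 0) η + (a 1) j • comp0 (a 1) η = η j
  simp only [comp0, Finset.smul_sum, smul_smul]
  rw [← Finset.sum_add_distrib]
  have key : ∀ j' : Fin 2,
      (a 0) j * (starRingEnd ℂ) ((a 0) j') + (a 1) j * (starRingEnd ℂ) ((a 1) j')
        = if j = j' then 1 else 0 := by
    intro j'
    simpa [Fin.sum_univ_two] using complete_two a ha j j'
  calc (∑ j' : Fin 2, (((a 0) j * (starRingEnd ℂ) ((a 0) j')) • η j'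
          + ((a 1) j * (starRingEnd ℂ) ((a 1) j')) • η j'))
      = ∑ j' : Fin 2, (if j = j' then (1:ℂ) else 0) • η j' := by
        refine Finset.sum_congr rfl fun j' _ => ?_
        rw [← add_smul, key j']
    _ = η j := by simp
end Aux3
/-- U† Z̃₀ U = sin²θ · |s₀⟩⟨s₀| ⊗ Z₀. -/
theorem conjugated_Z0
    {HB : Type*} [NormedAddCommGroup HB] [InnerProductSpace ℂ HB] [FiniteDimensional ℂ HB]
    (s a : Fin 2 → EuclideanSpace ℂ (Fin 2)) (hs : Orthonormal ℂ s) (ha : Orthonormal ℂ a)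
    (θ : ℝ)
    (Usa : Matrix (Fin 2 × Fin 2) (Fin 2 × Fin 2) ℂ)
    (hUsa : Usa ∈ Matrix.unitaryGroup (Fin 2 × Fin 2) ℂ)
    (hU0 : ∀ b : HB, opU Usa (tp (s 0) (tp (a 0) b)) =
      tp ((Real.sin θ : ℂ) • s 0 + (Real.cos θ : ℂ) • s 1) (tp (a 0) b))
    (hU1 : ∀ b : HB, opU Usa (tp (s 0) (tp (a 1) b)) = tp (s 1) (tp (a 1) b))
    (H : Submodule ℂ (PiLp 2 (fun _ : Fin 2 => HB))) :
    LinearMap.adjoint (opU (HB := HB) Usa) ∘ₗ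
        ((opU (HB := HB) Usa ∘ₗ opT (outerM (s 0)) (projOp H) ∘ₗ
            LinearMap.adjoint (opU (HB := HB) Usa)) ∘ₗ
          opT (outerM (s 0)) (LinearMap.id (R := ℂ) (M := PiLp 2 (fun _ : Fin 2 => HB))) ∘ₗ
          (opU (HB := HB) Usa ∘ₗ opT (outerM (s 0)) (projOp H) ∘ₗ
            LinearMap.adjoint (opU (HB := HB) Usa))) ∘ₗ
        opU (HB := HB) Usa =
      ((Real.sin θ ^ 2 : ℝ) : ℂ) •
        opT (outerM (s 0))
          (projOp H ∘ₗ opT (outerM (a 0)) (LinearMap.id (R := ℂ) (M := HB)) ∘ₗ projOp H) := by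
  classical
  have hadj : LinearMap.adjoint (opU (HB := HB) Usa) = opU Usa.conjTranspose :=
    opU_adjoint Usa
  have hcanc : ∀ x, LinearMap.adjoint (opU (HB := HB) Usa) (opU (HB := HB) Usa x) = x := by
    intro x
    have h1 : Usa.conjTranspose * Usa = 1 := by
      rw [← Matrix.star_eq_conjTranspose]; exact hUsa.1
    rw [hadj, ← LinearMap.comp_apply, opU_comp, h1, opU_one, LinearMap.id_apply]
  have hss := orthonormal_iff_ite.mp hs
  have haa := orthonormal_iff_ite.mp ha
  have h00 : ⟪s 0, s 0⟫_ℂ = 1 := by simpa using hss 0 0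
  have h01 : ⟪s 0, s 1⟫_ℂ = 0 := by simpa using hss 0 1
  have ha00 : ⟪a 0, a 0⟫_ℂ = 1 := by simpa using haa 0 0
  -- U on s0 ⊗ η
  have hUs : ∀ η : PiLp 2 (fun _ : Fin 2 => HB),
      opU (HB := HB) Usa (tp (s 0) η)
        = tp ((Real.sin θ : ℂ) • s 0 + (Real.cos θ : ℂ) • s 1) (tp (a 0) (comp0 (a 0) η))
          + tp (s 1) (tp (a 1) (comp0 (a 1) η)) := by
    intro η
    conv_lhs => rw [← tp_decomp a ha η]
    rw [tp_add_right, map_add, hU0, hU1]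
  have hSUs : ∀ η : PiLp 2 (fun _ : Fin 2 => HB),
      comp0 (s 0) (opU (HB := HB) Usa (tp (s 0) η))
        = (Real.sin θ : ℂ) • tp (a 0) (comp0 (a 0) η) := by
    intro η
    rw [hUs, comp0_add, comp0_tp, comp0_tp, inner_add_right, inner_smul_right,
      inner_smul_right, h00, h01]
    simp
  apply LinearMap.ext; intro f
  apply ext_inner_left ℂ; intro g
  simp only [LinearMap.comp_apply, LinearMap.smul_apply]
  rw [hcanc, hcanc]
  set P := projOp H with hP
  -- rewrite the two Q-applications
  have hQinner : ∀ x, ⟪g, opT (outerM (s 0)) P x⟫_ℂ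
      = ⟪tp (s 0) (P (comp0 (s 0) g)), x⟫_ℂ := by
    intro x
    rw [opT_outer, inner_tp_right, ← projOp_inner, ← inner_tp_left]
  rw [hQinner, LinearMap.adjoint_inner_right]
  -- the inner part
  rw [opT_outer (s 0) (LinearMap.id) (opU Usa (opT (outerM (s 0)) P f)),
    opT_outer (s 0) P f, LinearMap.id_apply, hSUs, tp_smul_right, inner_smul_right,
    inner_tp_right, hSUs, inner_smul_left, inner_tp_left, comp0_tp, ha00, one_smul]
  -- RHS
  rw [inner_smul_right, opT_outer, LinearMap.comp_apply, LinearMap.comp_apply,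
    opT_outer, LinearMap.id_apply, inner_tp_right, ← projOp_inner, inner_tp_right, ← hP]
  rw [Complex.conj_ofReal]
  push_cast
  ring
end
end

section
/- Let Π_1 = γ_1|π⟩⟨π| with 0 < γ_1 ≤ 1, Σ_{m=1}^M Π_m = P = |π⟩⟨π| + |π⊥⟩⟨π⊥|, Z_0 = η_0|π⟩⟨π| + ν_0|π⊥⟩⟨π⊥| with η_0 ≥ ν_0 ≥ 0 and γ_1 < η_0 − (1−γ_1)ν_0. Set sin²θ = γ_1/(η_0 − (1−γ_1)ν_0), c̃_1 = 1, and c̃_m = ν_0 sin²θ for m ≥ 2. Then 0 ≤ c̃_m ≤ 1 for all m, sin²θ ≤ 1, and Σ_m c̃_m Π_m = sin²θ · Z_0. -/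
noncomputable section
open scoped InnerProductSpace ComplexConjugate ComplexOrder

variable {E F : Type*} [NormedAddCommGroup E] [InnerProductSpace ℂ E]
  [NormedAddCommGroup F] [InnerProductSpace ℂ F]

/-- Appendix C computation for Proposition 2. -/
theorem prop2_coefficients
    {H : Type*} [NormedAddCommGroup H] [InnerProductSpace ℂ H]
    (M : ℕ) (hM : 0 < M) (pi pip : H) (hON : Orthonormal ℂ ![pi, pip])
    (Pv : Fin M → (H →ₗ[ℂ] H)) (hpsd : ∀ m, IsPSD (Pv m))
    (hrank : ∀ m, Module.finrank ℂ (LinearMap.range (Pv m)) ≤ 1)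
    (γ η0 ν0 : ℝ) (hγ0 : 0 < γ) (hγ1 : γ ≤ 1)
    (hP1 : Pv ⟨0, hM⟩ = ((γ : ℝ) : ℂ) • rankOne pi pi)
    (hsum : ∑ m, Pv m = rankOne pi pi + rankOne pip pip)
    (hν0 : 0 ≤ ν0) (hν1 : ν0 ≤ 1) (hge : ν0 ≤ η0)
    (hlt : γ < η0 - (1 - γ) * ν0) :
    (∀ m : Fin M,
        0 ≤ (if m = (⟨0, hM⟩ : Fin M) then (1 : ℝ) else ν0 * (γ / (η0 - (1 - γ) * ν0))) ∧
        (if m = (⟨0, hM⟩ : Fin M) then (1 : ℝ) else ν0 * (γ / (η0 - (1 - γ) * ν0))) ≤ 1) ∧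
      γ / (η0 - (1 - γ) * ν0) ≤ 1 ∧
      ∑ m, (((if m = (⟨0, hM⟩ : Fin M) then (1 : ℝ)
            else ν0 * (γ / (η0 - (1 - γ) * ν0))) : ℝ) : ℂ) • Pv m =
        ((γ / (η0 - (1 - γ) * ν0) : ℝ) : ℂ) •
          (((η0 : ℝ) : ℂ) • rankOne pi pi + ((ν0 : ℝ) : ℂ) • rankOne pip pip) := by
  have hD : 0 < η0 - (1 - γ) * ν0 := hγ0.trans hlt
  set s : ℝ := γ / (η0 - (1 - γ) * ν0) with hs
  have hs0 : 0 ≤ s := div_nonneg hγ0.le hD.le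
  have hs1 : s ≤ 1 := (div_le_one hD).mpr hlt.le
  refine ⟨fun m => ?_, hs1, ?_⟩
  · split_ifs
    · exact ⟨zero_le_one, le_refl 1⟩
    · exact ⟨mul_nonneg hν0 hs0, mul_le_one₀ hν1 hs0 hs1⟩
  · have split : ∀ m : Fin M,
        (((if m = (⟨0, hM⟩ : Fin M) then (1 : ℝ) else ν0 * s) : ℝ) : ℂ) • Pv m
        = ((ν0 * s : ℝ) : ℂ) • Pv m
          + (if m = (⟨0, hM⟩ : Fin M) then ((1 - ν0 * s : ℝ) : ℂ) • Pv m else 0) := by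
      intro m
      split_ifs with h
      · push_cast
        module
      · simp
    rw [Finset.sum_congr rfl fun m _ => split m, Finset.sum_add_distrib,
      Finset.sum_ite_eq' Finset.univ (⟨0, hM⟩ : Fin M)
        (fun m => ((1 - ν0 * s : ℝ) : ℂ) • Pv m),
      if_pos (Finset.mem_univ _), ← Finset.smul_sum, hsum, hP1]
    have hkey : γ + ν0 * s * (1 - γ) = s * η0 := by
      have h1 : s * (η0 - (1 - γ) * ν0) = γ := by rw [hs]; exact div_mul_cancel₀ _ hD.ne'
      linear_combination -h1
    have hkeyC : (γ : ℂ) + (ν0 : ℂ) * (s : ℂ) * (1 - (γ : ℂ)) = (s : ℂ) * (η0 : ℂ) := by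
      exact_mod_cast hkey
    match_scalars
    · push_cast
      linear_combination hkeyC
    · push_cast
      ring
end
end

section
/- Any POVM on a finite-dimensional Hilbert space whose elements all have rank at most one and which is extremal in the convex set of POVMs with a fixed finite outcome set has the property that its nonzero elements are linearly independent as Hermitian operators. -/
noncomputable section
open scoped InnerProductSpace ComplexConjugate ComplexOrder

variable {E F : Type*} [NormedAddCommGroup E] [InnerProductSpace ℂ E]
  [NormedAddCommGroup F] [InnerProductSpace ℂ F]

/-- an extremal POVM whose elements have rank at most one has linearly
independent (over ℝ, as Hermitian operators) nonzero elements. -/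
theorem extremal_povm_linearIndependent
    {H : Type*} [NormedAddCommGroup H] [InnerProductSpace ℂ H] [FiniteDimensional ℂ H]
    (M : ℕ) (Pv : Fin M → (H →ₗ[ℂ] H))
    (hpsd : ∀ m, IsPSD (Pv m)) (hsum : ∑ m, Pv m = LinearMap.id)
    (hrank : ∀ m, Module.finrank ℂ (LinearMap.range (Pv m)) ≤ 1)
    (hext : ∀ (Q R : Fin M → (H →ₗ[ℂ] H)),
      (∀ m, IsPSD (Q m)) → (∑ m, Q m = LinearMap.id) →
      (∀ m, IsPSD (R m)) → (∑ m, R m = LinearMap.id) →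
      ∀ t : ℝ, 0 < t → t < 1 →
      (∀ m, Pv m = ((t : ℝ) : ℂ) • Q m + ((1 - t : ℝ) : ℂ) • R m) →
      Q = Pv ∧ R = Pv) :
    LinearIndependent ℝ (fun m : {m : Fin M // Pv m ≠ 0} => Pv m.1) := by
  classical
  rw [Fintype.linearIndependent_iff]
  intro g hg
  -- extend g by zero to all of Fin M
  set c : Fin M → ℝ := fun m => if h : Pv m ≠ 0 then g ⟨m, h⟩ else 0 with hc
  have hsum0 : ∑ m, (c m : ℂ) • Pv m = 0 := by
    have h1 : ∑ m, (c m : ℂ) • Pv m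
        = ∑ m ∈ Finset.univ.filter (fun m => Pv m ≠ 0), (c m : ℂ) • Pv m := by
      refine (Finset.sum_filter_of_ne ?_).symm
      intro x _ hx
      intro h0
      apply hx
      rw [h0, smul_zero]
    have h2 : ∑ m ∈ Finset.univ.filter (fun m => Pv m ≠ 0), (c m : ℂ) • Pv m
        = ∑ i : {m : Fin M // Pv m ≠ 0}, (c i.1 : ℂ) • Pv i.1 := by
      refine Finset.sum_subtype _ (by simp) _
    have h3 : ∑ i : {m : Fin M // Pv m ≠ 0}, (c i.1 : ℂ) • Pv i.1
        = ∑ i : {m : Fin M // Pv m ≠ 0}, g i • Pv i.1 := by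
      refine Finset.sum_congr rfl fun i _ => ?_
      rw [hc]; simp only [dif_pos i.2]
      rw [← algebraMap_smul ℂ (g i) (Pv i.1)]; rfl
    rw [h1, h2, h3, hg]
  -- choose small ε
  set B : ℝ := (∑ m, |c m|) + 1 with hB
  have hBpos : 0 < B := by
    have : (0:ℝ) ≤ ∑ m, |c m| := Finset.sum_nonneg fun m _ => abs_nonneg _
    linarith
  set ε : ℝ := 1 / B with hε
  have hεpos : 0 < ε := by positivity
  have hbound : ∀ m, |ε * c m| ≤ 1 := by
    intro m
    have h1 : |c m| ≤ B := by
      have : |c m| ≤ ∑ m, |c m| :=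
        Finset.single_le_sum (fun m _ => abs_nonneg (c m)) (Finset.mem_univ m)
      linarith
    rw [abs_mul, abs_of_pos hεpos]
    calc ε * |c m| ≤ ε * B := by nlinarith
      _ = 1 := by rw [hε]; field_simp
  -- the two perturbed POVMs
  set Q : Fin M → (H →ₗ[ℂ] H) := fun m => ((1 + ε * c m : ℝ) : ℂ) • Pv m with hQdef
  set R : Fin M → (H →ₗ[ℂ] H) := fun m => ((1 - ε * c m : ℝ) : ℂ) • Pv m with hRdef
  have hQpsd : ∀ m, IsPSD (Q m) := by
    intro m x
    have h1 : (0:ℝ) ≤ 1 + ε * c m := by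
      have := hbound m
      have := abs_le.mp (hbound m)
      linarith [this.1]
    simp only [hQdef, LinearMap.smul_apply, inner_smul_right]
    exact mul_nonneg (by exact_mod_cast h1) (hpsd m x)
  have hRpsd : ∀ m, IsPSD (R m) := by
    intro m x
    have h1 : (0:ℝ) ≤ 1 - ε * c m := by
      have := abs_le.mp (hbound m)
      linarith [this.2]
    simp only [hRdef, LinearMap.smul_apply, inner_smul_right]
    exact mul_nonneg (by exact_mod_cast h1) (hpsd m x)
  have hQsum : ∑ m, Q m = LinearMap.id := by
    have : ∀ m, Q m = Pv m + (ε : ℂ) • ((c m : ℂ) • Pv m) := by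
      intro m
      rw [hQdef]
      push_cast
      rw [add_smul, one_smul, smul_smul]
    simp only [this]
    rw [Finset.sum_add_distrib, ← Finset.smul_sum, hsum0, smul_zero, add_zero, hsum]
  have hRsum : ∑ m, R m = LinearMap.id := by
    have : ∀ m, R m = Pv m - (ε : ℂ) • ((c m : ℂ) • Pv m) := by
      intro m
      rw [hRdef]
      push_cast
      rw [sub_smul, one_smul, smul_smul]
    simp only [this]
    rw [Finset.sum_sub_distrib, ← Finset.smul_sum, hsum0, smul_zero, sub_zero, hsum]
  have hcomb : ∀ m, Pv m = (((1/2 : ℝ)) : ℂ) • Q m + (((1 - 1/2 : ℝ)) : ℂ) • R m := by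
    intro m
    rw [hQdef, hRdef]
    simp only [smul_smul]
    rw [← add_smul]
    push_cast
    ring_nf
    rw [one_smul]
  obtain ⟨hQ, _⟩ := hext Q R hQpsd hQsum hRpsd hRsum (1/2) (by norm_num) (by norm_num) hcomb
  intro i
  have h1 : Q i.1 = Pv i.1 := congrFun hQ i.1
  rw [hQdef] at h1
  have h2 : ((ε * c i.1 : ℝ) : ℂ) • Pv i.1 = 0 := by
    have h1' : ((1 + ε * c i.1 : ℝ) : ℂ) • Pv i.1 = Pv i.1 := h1
    have hz : (((1 + ε * c i.1 : ℝ) : ℂ) - 1) • Pv i.1 = 0 := by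
      rw [sub_smul, one_smul, h1', sub_self]
    convert hz using 2
    push_cast; ring
  rcases smul_eq_zero.mp h2 with h | h
  · have hεc : ε * c i.1 = 0 := by exact_mod_cast h
    have hci : c i.1 = 0 := by
      rcases mul_eq_zero.mp hεc with h' | h'
      · exact absurd h' (ne_of_gt hεpos)
      · exact h'
    have : c i.1 = g i := by rw [hc]; simp only [dif_pos i.2]
    rw [← this, hci]
  · exact absurd h i.2
end
end
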